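/- Let p > 4, θ > 4, η ≥ 0, ρ > 0, C₄, C_p > 0 with ηC₄⁴ρ < 2, and suppose β > ((θ−2)(p−4)/((θ−4)(p−2)))^{(p−4)/2} · (1 − (η/2)C₄⁴ρ) / ((p−2)C_p^p ρ). Then (4/(2 − ηC₄⁴ρ)) · ((θ−2)/(θ−4)) · (1/2 − 1/(p−2)) · (1/(β(p−2)C_p^p ρ))^{2/(p−4)} · (1 − (η/2)C₄⁴ρ)^{(p−2)/(p−4)} < 1. -/
import Mathlib


/-- the key algebraic inequality of Lemma 3.7: if `ηC₄⁴ρ < 2` and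
`β > ((θ−2)(p−4)/((θ−4)(p−2)))^((p−4)/2)·(1 − (η/2)C₄⁴ρ)/((p−2)C_p^p ρ)`, then
`(4/(2 − ηC₄⁴ρ))·((θ−2)/(θ−4))·(1/2 − 1/(p−2))·(1/(β(p−2)C_p^p ρ))^(2/(p−4))·
(1 − (η/2)C₄⁴ρ)^((p−2)/(p−4)) < 1`. -/
theorem stmt18 (p θ η ρ C₄ Cp β : ℝ) (hp : 4 < p) (hθ : 4 < θ) (hη : 0 ≤ η)
    (hρ : 0 < ρ) (hC₄ : 0 < C₄) (hCp : 0 < Cp)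
    (hsm : η * C₄ ^ 4 * ρ < 2)
    (hβ : ((θ - 2) * (p - 4) / ((θ - 4) * (p - 2))) ^ ((p - 4) / 2)
        * (1 - η / 2 * C₄ ^ 4 * ρ) / ((p - 2) * Cp ^ p * ρ) < β) :
    4 / (2 - η * C₄ ^ 4 * ρ) * ((θ - 2) / (θ - 4)) * (1 / 2 - 1 / (p - 2))
      * (1 / (β * (p - 2) * Cp ^ p * ρ)) ^ ((2 : ℝ) / (p - 4))
      * (1 - η / 2 * C₄ ^ 4 * ρ) ^ ((p - 2) / (p - 4)) < 1 := by
  have hp4 : (0:ℝ) < p - 4 := by linarith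
  have hp2 : (0:ℝ) < p - 2 := by linarith
  have hθ4 : (0:ℝ) < θ - 4 := by linarith
  have hθ2 : (0:ℝ) < θ - 2 := by linarith
  set a : ℝ := 1 - η / 2 * C₄ ^ 4 * ρ with ha
  have ha0 : 0 < a := by rw [ha]; nlinarith
  have hCpp : 0 < Cp ^ p := Real.rpow_pos_of_pos hCp p
  set D : ℝ := (p - 2) * Cp ^ p * ρ with hD
  have hD0 : 0 < D := by positivity
  set L : ℝ := (θ - 2) * (p - 4) / ((θ - 4) * (p - 2)) with hL
  have hL0 : 0 < L := by positivity
  set s : ℝ := (p - 4) / 2 with hs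
  have hLs : 0 < L ^ s := Real.rpow_pos_of_pos hL0 _
  have hβ0 : 0 < β := lt_trans (by positivity) hβ
  have hβD0 : 0 < β * D := by positivity
  set e : ℝ := 2 / (p - 4) with he
  have he0 : 0 < e := by positivity
  have hβD : L ^ s * a < β * D := by
    have h := (div_lt_iff₀ hD0).mp hβ
    linarith
  have hkey : a / (β * D) < (L ^ s)⁻¹ := by
    rw [div_lt_iff₀ hβD0, inv_mul_eq_div, lt_div_iff₀ hLs]
    linarith [hβD]
  have hpow : (a / (β * D)) ^ e < L⁻¹ := by
    have h1 : (a / (β * D)) ^ e < ((L ^ s)⁻¹) ^ e :=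
      Real.rpow_lt_rpow (by positivity) hkey he0
    have h2 : ((L ^ s)⁻¹) ^ e = L⁻¹ := by
      rw [← Real.rpow_neg hL0.le, ← Real.rpow_mul hL0.le]
      have : -s * e = -1 := by
        rw [hs, he]; field_simp
      rw [this, Real.rpow_neg_one]
    rw [h2] at h1
    exact h1
  have hse : (p - 2) / (p - 4) = 1 + e := by
    rw [he]; field_simp; ring
  have hrw : 4 / (2 - η * C₄ ^ 4 * ρ) * ((θ - 2) / (θ - 4)) * (1 / 2 - 1 / (p - 2))
      * (1 / (β * (p - 2) * Cp ^ p * ρ)) ^ e * a ^ ((p - 2) / (p - 4))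
      = L * ((a / (β * D)) ^ e) := by
    have h2a : 2 - η * C₄ ^ 4 * ρ = 2 * a := by rw [ha]; ring
    have hbd : β * (p - 2) * Cp ^ p * ρ = β * D := by rw [hD]; ring
    rw [h2a, hbd, hse, Real.rpow_add ha0, Real.rpow_one,
      Real.div_rpow ha0.le hβD0.le, Real.div_rpow zero_le_one hβD0.le,
      Real.one_rpow, hL]
    have hXe : 0 < (β * D) ^ e := Real.rpow_pos_of_pos hβD0 _
    field_simp
    ring
  rw [hrw]
  calc L * (a / (β * D)) ^ e < L * L⁻¹ := by
        exact mul_lt_mul_of_pos_left hpow hL0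
    _ = 1 := mul_inv_cancel₀ (ne_of_gt hL0)
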